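/- Let σ : Equiv.Perm (Fin n) be a variable permutation and f : X → ℝ an objective function with f (x ∘ σ) = f x for every x : X. Then for every depth p : ℕ, all parameters β γ : Fin p → ℝ, and every x : X, the QAOA measurement probabilities with objective Hamiltonian C := Matrix.diagonal (fun x => (f x : ℂ)) satisfy Pr(x) = Pr(x ∘ σ). -/

import Mathlib

/-- Permutation matrix of a permutation `a` of a finite type `X`:
`(P a) x y = 1` if `x = a y` and `0` otherwise. -/
noncomputable def permMatrix {X : Type*} [Fintype X] [DecidableEq X] (a : Equiv.Perm X) :
    Matrix X X ℂ :=
  Matrix.of fun x y => if x = a y then 1 else 0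

/-- The transverse-field mixing Hamiltonian `B = ∑_j X_j` in the computational basis:
`B x y = 1` if the bitstrings `x` and `y` differ in exactly one coordinate, else `0`. -/
noncomputable def mixerB (n : ℕ) : Matrix (Fin n → Bool) (Fin n → Bool) ℂ :=
  Matrix.of fun x y => if (Finset.univ.filter fun i => x i ≠ y i).card = 1 then 1 else 0

/-- The diagonal objective Hamiltonian `C` of an objective function `f`. -/
noncomputable def objC (n : ℕ) (f : (Fin n → Bool) → ℝ) :
    Matrix (Fin n → Bool) (Fin n → Bool) ℂ :=
  Matrix.diagonal fun x => (f x : ℂ)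

/-- The uniform superposition initial state. -/
noncomputable def uniformState (n : ℕ) : (Fin n → Bool) → ℂ :=
  fun _ => ((1 / Real.sqrt (2 ^ n) : ℝ) : ℂ)

/-- The depth-`p` QAOA state with parameters `β γ : Fin p → ℝ`: the layers
`exp (-i γ_j C)` then `exp (-i β_j B)` are applied to the uniform initial state
in order `j = 1, …, p`. -/
noncomputable def qaoaState (n : ℕ) (f : (Fin n → Bool) → ℝ) (p : ℕ) (β γ : Fin p → ℝ) :
    (Fin n → Bool) → ℂ :=
  (((List.finRange p).map fun j =>
      NormedSpace.exp ((-(β j : ℂ) * Complex.I) • mixerB n) *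
        NormedSpace.exp ((-(γ j : ℂ) * Complex.I) • objC n f)).reverse.prod).mulVec
    (uniformState n)

section Aux
variable {X : Type*} [Fintype X] [DecidableEq X]

lemma permMatrix_mulVec (a : Equiv.Perm X) (v : X → ℂ) :
    (permMatrix a).mulVec v = fun x => v (a.symm x) := by
  funext x
  simp only [permMatrix, Matrix.mulVec, dotProduct, Matrix.of_apply, ite_mul, one_mul,
    zero_mul]
  rw [show (∑ b : X, if x = a b then v b else 0) = ∑ b : X, if b = a.symm x then v b else 0 from
      Finset.sum_congr rfl fun b _ => by
        congr 1
        exact propext ⟨fun h => by simp [h], fun h => by simp [h]⟩,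
    Finset.sum_ite_eq' Finset.univ (a.symm x) v, if_pos (Finset.mem_univ _)]

lemma permMatrix_commute (a : Equiv.Perm X) (M : Matrix X X ℂ)
    (h : ∀ x y, M (a x) (a y) = M x y) : Commute (permMatrix a) M := by
  ext x y
  simp only [Matrix.mul_apply, permMatrix, Matrix.of_apply]
  rw [Finset.sum_eq_single (a.symm x), Finset.sum_eq_single (a y)]
  · simp [← h (a.symm x) y]
  · intro b _ hb; simp [hb]
  · simp
  · intro b _ hb
    rw [if_neg, zero_mul]
    intro h'
    exact hb (by rw [h', Equiv.symm_apply_apply])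
  · simp

end Aux

/-- The permutation of bitstrings induced by a variable permutation: `x ↦ x ∘ π.symm`. -/
def bitPerm (n : ℕ) (π : Equiv.Perm (Fin n)) : Equiv.Perm (Fin n → Bool) :=
  Equiv.arrowCongr π (Equiv.refl Bool)

lemma bitPerm_apply (n : ℕ) (π : Equiv.Perm (Fin n)) (x : Fin n → Bool) :
    bitPerm n π x = x ∘ π.symm := rfl

lemma bitPerm_symm_apply (n : ℕ) (π : Equiv.Perm (Fin n)) (x : Fin n → Bool) :
    (bitPerm n π).symm x = x ∘ π := rfl

lemma mixerB_invariant (n : ℕ) (π : Equiv.Perm (Fin n)) (x y : Fin n → Bool) :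
    mixerB n (x ∘ π) (y ∘ π) = mixerB n x y := by
  simp only [mixerB, Matrix.of_apply]
  congr 1
  rw [show (Finset.univ.filter fun i => (x ∘ π) i ≠ (y ∘ π) i).card
        = (Finset.univ.filter fun i => x i ≠ y i).card from
    Finset.card_bij' (fun i _ => π i) (fun j _ => π.symm j)
      (by intro i hi; simp only [Finset.mem_filter, Finset.mem_univ, true_and] at hi ⊢; exact hi)
      (by intro j hj; simp only [Finset.mem_filter, Finset.mem_univ, true_and,
            Function.comp_apply, Equiv.apply_symm_apply] at hj ⊢; exact hj)
      (by intro i _; simp) (by intro j _; simp)]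

/-- Corollary 1: if a variable permutation `σ` leaves the objective `f` invariant
(`f (x ∘ σ) = f x` for every `x`), then for every depth `p`, all parameters, and every
bitstring `x`, the QAOA measurement probabilities satisfy `Pr x = Pr (x ∘ σ)`. -/
theorem qaoa_variable_permutation_symmetry (n : ℕ) (σ : Equiv.Perm (Fin n))
    (f : (Fin n → Bool) → ℝ) (hf : ∀ x : Fin n → Bool, f (x ∘ σ) = f x) :
    ∀ (p : ℕ) (β γ : Fin p → ℝ) (x : Fin n → Bool),
      ‖qaoaState n f p β γ x‖ ^ 2 = ‖qaoaState n f p β γ (x ∘ σ)‖ ^ 2 := by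
  intro p β γ x
  set a : Equiv.Perm (Fin n → Bool) := bitPerm n σ with ha
  have hfinv : ∀ y : Fin n → Bool, f (y ∘ (σ.symm : Equiv.Perm (Fin n))) = f y := by
    intro y
    have := hf (y ∘ σ.symm)
    rw [show (y ∘ σ.symm) ∘ σ = y from funext fun i => by simp] at this
    exact this.symm
  -- commute of permMatrix a with mixerB and objC
  have hB : Commute (permMatrix a) (mixerB n) := by
    apply permMatrix_commute
    intro u v
    rw [bitPerm_apply, bitPerm_apply]
    exact mixerB_invariant n σ.symm u v
  have hC : Commute (permMatrix a) (objC n f) := by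
    apply permMatrix_commute
    intro u v
    simp only [objC, Matrix.diagonal_apply, bitPerm_apply]
    by_cases h : u = v
    · subst h; rw [if_pos rfl, if_pos rfl]
      exact_mod_cast congrArg (fun r : ℝ => (r : ℂ)) (hfinv u)
    · rw [if_neg, if_neg h]
      intro h'
      simp only [ha, bitPerm_apply] at h'
      exact h (funext fun i => by
        have := congrFun h' (σ i); simpa using this)
  set P := permMatrix a with hP
  set M := (((List.finRange p).map fun j =>
      NormedSpace.exp ((-(β j : ℂ) * Complex.I) • mixerB n) *
        NormedSpace.exp ((-(γ j : ℂ) * Complex.I) • objC n f)).reverse.prod) with hM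
  have hcomm : Commute P M := by
    apply Commute.list_prod_right
    intro m hm
    rw [List.mem_reverse, List.mem_map] at hm
    obtain ⟨j, _, rfl⟩ := hm
    exact ((hB.smul_right _).exp_right).mul_right ((hC.smul_right _).exp_right)
  have hs : P.mulVec (uniformState n) = uniformState n := by
    rw [hP, permMatrix_mulVec]; rfl
  have key : qaoaState n f p β γ (x ∘ σ) = qaoaState n f p β γ x := by
    have h1 : qaoaState n f p β γ (x ∘ σ) = (P.mulVec (M.mulVec (uniformState n))) x := by
      rw [hP, permMatrix_mulVec]
      rfl
    rw [h1, Matrix.mulVec_mulVec, hcomm.eq, ← Matrix.mulVec_mulVec, hs]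
    rfl
  rw [key]
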